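/- The elements P'_n of NSymm defined recursively by P'_n = nZ_n - (P'_1 Z_{n-1} + P'_2 Z_{n-2} + ... + P'_{n-1} Z_1) are primitive elements of NSymm. -/

import Mathlib

open TensorProduct

attribute [local instance high] Algebra.toModule

/-- `NSymm` is the free associative algebra `ℤ⟨Z_1, Z_2, ...⟩`. -/
noncomputable abbrev NSymm : Type := FreeAlgebra ℤ ℕ

/-- `Z 0 = 1` and `Z (n+1)` is the generator `Z_{n+1}` of `NSymm`. -/
noncomputable def Z : ℕ → NSymm
  | 0 => 1
  | n + 1 => FreeAlgebra.ι ℤ n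

/-- The comultiplication of `NSymm`: the algebra homomorphism with
`μ(Z_n) = Σ_{i+j=n} Z_i ⊗ Z_j`. -/
noncomputable def mu : NSymm →ₐ[ℤ] NSymm ⊗[ℤ] NSymm :=
  FreeAlgebra.lift ℤ fun n => ∑ i ∈ Finset.range (n + 2), Z i ⊗ₜ[ℤ] Z (n + 1 - i)

/-- The elements `P'`, defined by the recursion
`P' n = n Z_n - (P'_1 Z_{n-1} + P'_2 Z_{n-2} + ⋯ + P'_{n-1} Z_1)` (and `P' 0 = 0`). -/
noncomputable def P' : ℕ → NSymm
  | 0 => 0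
  | n + 1 =>
    (n + 1) • Z (n + 1) - ∑ i ∈ (Finset.range n).attach, P' (i.1 + 1) * Z (n - i.1)
  decreasing_by exact Nat.succ_lt_succ (Finset.mem_range.mp i.2)

section Aux
open Finset Finset.Nat
lemma P'_succ (n : ℕ) :
    P' (n + 1) = (n + 1) • Z (n + 1) - ∑ i ∈ Finset.range n, P' (i + 1) * Z (n - i) := by
  rw [P']
  congr 1
  exact Finset.sum_attach (Finset.range n) (fun i => P' (i + 1) * Z (n - i))

lemma newton (n : ℕ) :
    ∑ p ∈ antidiagonal n, P' p.1 * Z p.2 = n • Z n := by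
  cases n with
  | zero => simp [P']
  | succ m =>
    rw [Finset.Nat.sum_antidiagonal_eq_sum_range_succ (fun a b => P' a * Z b),
      Finset.sum_range_succ' (fun k => P' k * Z (m + 1 - k)),
      Finset.sum_range_succ (fun k => P' (k + 1) * Z (m + 1 - (k + 1)))]
    have h0 : P' 0 = 0 := by rw [P']
    simp only [h0, zero_mul, add_zero, Nat.succ_sub_succ, Nat.sub_self]
    have hZ0 : Z 0 = 1 := rfl
    rw [hZ0, mul_one, P'_succ]
    abel

lemma muZ (n : ℕ) : mu (Z n) = ∑ p ∈ antidiagonal n, Z p.1 ⊗ₜ[ℤ] Z p.2 := by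
  cases n with
  | zero => simp [Z, Algebra.TensorProduct.one_def]
  | succ m =>
    rw [Finset.Nat.sum_antidiagonal_eq_sum_range_succ (fun a b => Z a ⊗ₜ[ℤ] Z b)]
    show mu (FreeAlgebra.ι ℤ m) = _
    rw [mu, FreeAlgebra.lift_ι_apply]

lemma tri {M : Type*} [AddCommMonoid M] (N : ℕ) (f : ℕ → ℕ → ℕ → M) :
    ∑ k ∈ Finset.range (N + 1), ∑ p ∈ antidiagonal (N - k), f k p.1 p.2
      = ∑ q ∈ antidiagonal N, ∑ p ∈ antidiagonal q.1, f p.1 p.2 q.2 := by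
  rw [Finset.sum_sigma', Finset.sum_sigma']
  refine Finset.sum_nbij' (fun x => ⟨(x.1 + x.2.1, x.2.2), (x.1, x.2.1)⟩)
      (fun x => ⟨x.2.1, (x.2.2, x.1.2)⟩) ?_ ?_ ?_ ?_ ?_
  · rintro ⟨a, b, c⟩ h
    simp only [Finset.mem_sigma, Finset.mem_range, Finset.HasAntidiagonal.mem_antidiagonal] at h ⊢
    and_intros <;> first | trivial | omega
  · rintro ⟨⟨a, b⟩, c, d⟩ h
    simp only [Finset.mem_sigma, Finset.mem_range, Finset.HasAntidiagonal.mem_antidiagonal] at h ⊢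
    and_intros <;> first | trivial | omega
  · rintro ⟨a, b, c⟩ h; rfl
  · rintro ⟨⟨a, b⟩, c, d⟩ h
    simp only [Finset.mem_sigma, Finset.mem_range, Finset.HasAntidiagonal.mem_antidiagonal] at h
    simp only [Sigma.mk.inj_iff, Prod.mk.injEq, heq_eq_eq]
    and_intros <;> first | trivial | omega
  · rintro ⟨a, b, c⟩ h; rfl

lemma tri' {M : Type*} [AddCommMonoid M] (N : ℕ) (f : ℕ → ℕ → ℕ → M) :
    ∑ k ∈ Finset.range (N + 1), ∑ p ∈ antidiagonal (N - k), f k p.1 p.2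
      = ∑ q ∈ antidiagonal N, ∑ p ∈ antidiagonal q.2, f p.1 q.1 p.2 := by
  rw [Finset.sum_sigma', Finset.sum_sigma']
  refine Finset.sum_nbij' (fun x => ⟨(x.2.1, x.1 + x.2.2), (x.1, x.2.2)⟩)
      (fun x => ⟨x.2.1, (x.1.1, x.2.2)⟩) ?_ ?_ ?_ ?_ ?_
  · rintro ⟨a, b, c⟩ h
    simp only [Finset.mem_sigma, Finset.mem_range, Finset.HasAntidiagonal.mem_antidiagonal] at h ⊢
    and_intros <;> first | trivial | omega
  · rintro ⟨⟨a, b⟩, c, d⟩ h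
    simp only [Finset.mem_sigma, Finset.mem_range, Finset.HasAntidiagonal.mem_antidiagonal] at h ⊢
    and_intros <;> first | trivial | omega
  · rintro ⟨a, b, c⟩ h; rfl
  · rintro ⟨⟨a, b⟩, c, d⟩ h
    simp only [Finset.mem_sigma, Finset.mem_range, Finset.HasAntidiagonal.mem_antidiagonal] at h
    simp only [Sigma.mk.inj_iff, Prod.mk.injEq, heq_eq_eq]
    and_intros <;> first | trivial | omega
  · rintro ⟨a, b, c⟩ h; rfl

lemma nsmul_tmul_left (n : ℕ) (a b : NSymm) : (n • a) ⊗ₜ[ℤ] b = n • (a ⊗ₜ[ℤ] b) := by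
  rw [← Nat.cast_smul_eq_nsmul ℤ n a, ← Nat.cast_smul_eq_nsmul ℤ n (a ⊗ₜ[ℤ] b),
    TensorProduct.smul_tmul']

lemma nsmul_tmul_right (n : ℕ) (a b : NSymm) : a ⊗ₜ[ℤ] (n • b) = n • (a ⊗ₜ[ℤ] b) := by
  rw [← Nat.cast_smul_eq_nsmul ℤ n b, ← Nat.cast_smul_eq_nsmul ℤ n (a ⊗ₜ[ℤ] b),
    TensorProduct.tmul_smul]

lemma P'_zero : P' 0 = 0 := by rw [P']

lemma primitive_aux (n : ℕ) : mu (P' n) = P' n ⊗ₜ[ℤ] 1 + 1 ⊗ₜ[ℤ] P' n := by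
  induction n using Nat.strong_induction_on with
  | _ n ih =>
  cases n with
  | zero => rw [P'_zero]; simp
  | succ m =>
    conv_lhs => rw [P'_succ]
    rw [map_sub, map_nsmul, map_sum, muZ]
    have hterm : ∀ k ∈ Finset.range m,
        mu (P' (k + 1) * Z (m - k)) =
          (∑ p ∈ antidiagonal (m - k), (P' (k + 1) * Z p.1) ⊗ₜ[ℤ] Z p.2)
          + ∑ p ∈ antidiagonal (m - k), Z p.1 ⊗ₜ[ℤ] (P' (k + 1) * Z p.2) := by
      intro k hk
      rw [map_mul, ih (k + 1) (by simpa using Finset.mem_range.mp hk), muZ, add_mul,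
        Finset.mul_sum, Finset.mul_sum]
      congr 1 <;> exact Finset.sum_congr rfl fun p _ => by
        simp [Algebra.TensorProduct.tmul_mul_tmul]
    rw [Finset.sum_congr rfl hterm, Finset.sum_add_distrib]
    have hA : ∑ k ∈ Finset.range m, ∑ p ∈ antidiagonal (m - k), (P' (k + 1) * Z p.1) ⊗ₜ[ℤ] Z p.2
        = (∑ q ∈ antidiagonal (m + 1), q.1 • (Z q.1 ⊗ₜ[ℤ] Z q.2)) - P' (m + 1) ⊗ₜ[ℤ] 1 := by
      have h1 : ∑ k ∈ Finset.range (m + 2),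
            ∑ p ∈ antidiagonal (m + 1 - k), (P' k * Z p.1) ⊗ₜ[ℤ] Z p.2
          = ∑ q ∈ antidiagonal (m + 1), q.1 • (Z q.1 ⊗ₜ[ℤ] Z q.2) := by
        rw [tri (m + 1) (fun k a b => (P' k * Z a) ⊗ₜ[ℤ] Z b)]
        refine Finset.sum_congr rfl fun q hq => ?_
        rw [← TensorProduct.sum_tmul, newton, nsmul_tmul_left]
      have h2 : ∑ k ∈ Finset.range (m + 2),
            ∑ p ∈ antidiagonal (m + 1 - k), (P' k * Z p.1) ⊗ₜ[ℤ] Z p.2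
          = (∑ k ∈ Finset.range m,
              ∑ p ∈ antidiagonal (m - k), (P' (k + 1) * Z p.1) ⊗ₜ[ℤ] Z p.2)
            + P' (m + 1) ⊗ₜ[ℤ] 1 := by
        rw [Finset.sum_range_succ'
          (fun k => ∑ p ∈ antidiagonal (m + 1 - k), (P' k * Z p.1) ⊗ₜ[ℤ] Z p.2)]
        have hz : ∑ p ∈ antidiagonal (m + 1), (P' 0 * Z p.1) ⊗ₜ[ℤ] Z p.2 = 0 := by
          simp [P'_zero]
        simp only [Nat.add_sub_add_right, Nat.sub_zero]
        rw [hz, add_zero]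
        rw [Finset.sum_range_succ, Nat.sub_self, Finset.Nat.antidiagonal_zero,
          Finset.sum_singleton]
        congr 1
        show (P' (m + 1) * Z 0) ⊗ₜ[ℤ] Z 0 = _
        rw [show Z 0 = 1 from rfl, mul_one]
      rw [← h1, h2]
      abel
    have hB : ∑ k ∈ Finset.range m, ∑ p ∈ antidiagonal (m - k), Z p.1 ⊗ₜ[ℤ] (P' (k + 1) * Z p.2)
        = (∑ q ∈ antidiagonal (m + 1), q.2 • (Z q.1 ⊗ₜ[ℤ] Z q.2)) - 1 ⊗ₜ[ℤ] P' (m + 1) := by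
      have h1 : ∑ k ∈ Finset.range (m + 2),
            ∑ p ∈ antidiagonal (m + 1 - k), Z p.1 ⊗ₜ[ℤ] (P' k * Z p.2)
          = ∑ q ∈ antidiagonal (m + 1), q.2 • (Z q.1 ⊗ₜ[ℤ] Z q.2) := by
        rw [tri' (m + 1) (fun k a b => Z a ⊗ₜ[ℤ] (P' k * Z b))]
        refine Finset.sum_congr rfl fun q hq => ?_
        rw [← TensorProduct.tmul_sum, newton, nsmul_tmul_right]
      have h2 : ∑ k ∈ Finset.range (m + 2),
            ∑ p ∈ antidiagonal (m + 1 - k), Z p.1 ⊗ₜ[ℤ] (P' k * Z p.2)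
          = (∑ k ∈ Finset.range m,
              ∑ p ∈ antidiagonal (m - k), Z p.1 ⊗ₜ[ℤ] (P' (k + 1) * Z p.2))
            + 1 ⊗ₜ[ℤ] P' (m + 1) := by
        rw [Finset.sum_range_succ'
          (fun k => ∑ p ∈ antidiagonal (m + 1 - k), Z p.1 ⊗ₜ[ℤ] (P' k * Z p.2))]
        have hz : ∑ p ∈ antidiagonal (m + 1), Z p.1 ⊗ₜ[ℤ] (P' 0 * Z p.2) = 0 := by
          simp [P'_zero]
        simp only [Nat.add_sub_add_right, Nat.sub_zero]
        rw [hz, add_zero]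
        rw [Finset.sum_range_succ, Nat.sub_self, Finset.Nat.antidiagonal_zero,
          Finset.sum_singleton]
        congr 1
        show Z 0 ⊗ₜ[ℤ] (P' (m + 1) * Z 0) = _
        rw [show Z 0 = 1 from rfl, mul_one]
      rw [← h1, h2]
      abel
    rw [hA, hB]
    have hsum : (∑ q ∈ antidiagonal (m + 1), q.1 • (Z q.1 ⊗ₜ[ℤ] Z q.2))
        + ∑ q ∈ antidiagonal (m + 1), q.2 • (Z q.1 ⊗ₜ[ℤ] Z q.2)
        = (m + 1) • ∑ p ∈ antidiagonal (m + 1), Z p.1 ⊗ₜ[ℤ] Z p.2 := by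
      rw [← Finset.sum_add_distrib, ← Finset.sum_nsmul]
      refine Finset.sum_congr rfl fun q hq => ?_
      rw [← add_nsmul, Finset.HasAntidiagonal.mem_antidiagonal.mp hq]
    rw [← hsum]
    abel

end Aux

/-- Proposition 4.3: the elements `P' n` are primitive elements of `NSymm`. -/
theorem stmt_6 (n : ℕ) (hn : 1 ≤ n) :
    mu (P' n) = P' n ⊗ₜ[ℤ] 1 + 1 ⊗ₜ[ℤ] P' n := by
  exact primitive_aux n
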